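/- Let λ > 0, η > 0 with ηλ ≤ 1. Let (θ^k)_{k≥1} and (c^k)_{k≥1} be sequences in ℝ^d with θ^{k+1} = θ^k − η(sign(c^k) + λθ^k) for all k ≥ 1, where sign acts componentwise with sign(0) = 0. If ‖θ¹‖_∞ ≤ 1/λ, then ‖θ^k‖_∞ ≤ 1/λ for every k ≥ 1. -/

import Mathlib

open MeasureTheory Real Finset

local notation "⟪" x ", " y "⟫" => @inner ℝ _ _ x y

/-- componentwise sign map, with sign 0 = 0. -/
noncomputable def signVec {d : ℕ} (x : EuclideanSpace ℝ (Fin d)) : EuclideanSpace ℝ (Fin d) :=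
  (EuclideanSpace.equiv (Fin d) ℝ).symm fun i => Real.sign (x i)

/-- the ℓ∞ norm on ℝ^d. -/
noncomputable def linfNorm {d : ℕ} (x : EuclideanSpace ℝ (Fin d)) : ℝ :=
  ‖EuclideanSpace.equiv (Fin d) ℝ x‖

/-- the ℓ1 norm on ℝ^d. -/
noncomputable def l1Norm {d : ℕ} (x : EuclideanSpace ℝ (Fin d)) : ℝ :=
  ∑ i, |x i|


theorem lion_iterates_stay_in_box {d : ℕ} (lam η : ℝ) (hlam : 0 < lam) (hη : 0 < η)
    (hηlam : η * lam ≤ 1) (θ c : ℕ → EuclideanSpace ℝ (Fin d))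
    (hupd : ∀ k, 1 ≤ k → θ (k + 1) = θ k - η • (signVec (c k) + lam • θ k))
    (h1 : linfNorm (θ 1) ≤ 1 / lam) :
    ∀ k, 1 ≤ k → linfNorm (θ k) ≤ 1 / lam := by
  have hinv : (0:ℝ) ≤ 1 / lam := le_of_lt (by positivity)
  intro k hk
  induction k with
  | zero => omega
  | succ n ih =>
    rcases Nat.eq_zero_or_pos n with h0 | hn
    · subst h0; exact h1
    have ihn := ih hn
    rw [hupd n hn]
    -- componentwise bound
    unfold linfNorm at *
    rw [pi_norm_le_iff_of_nonneg hinv]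
    intro i
    have hcomp : (EuclideanSpace.equiv (Fin d) ℝ)
        (θ n - η • (signVec (c n) + lam • θ n)) i
        = (1 - η * lam) * θ n i - η * Real.sign (c n i) := by
      simp [signVec, EuclideanSpace.equiv, PiLp.sub_apply, PiLp.smul_apply, PiLp.add_apply]
      ring
    rw [hcomp]
    have hθi : |θ n i| ≤ 1 / lam := le_trans (norm_le_pi_norm (EuclideanSpace.equiv (Fin d) ℝ (θ n)) i) ihn
    have hs : |Real.sign (c n i)| ≤ 1 := by
      rcases Real.sign_apply_eq (c n i) with h | h | h <;> rw [h] <;> norm_num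
    have h1' : 0 ≤ 1 - η * lam := by linarith
    calc |(1 - η * lam) * θ n i - η * Real.sign (c n i)|
        ≤ |(1 - η * lam) * θ n i| + |η * Real.sign (c n i)| := abs_sub _ _
      _ = (1 - η * lam) * |θ n i| + η * |Real.sign (c n i)| := by
          rw [abs_mul, abs_mul, abs_of_nonneg h1', abs_of_pos hη]
      _ ≤ (1 - η * lam) * (1 / lam) + η * 1 := by
          gcongr
      _ = 1 / lam := by field_simp; ring
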